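/- (Fourier Tauberian theorem, one term) Let ν ≥ 0 and let ψ be a real-valued Schwartz function on ℝ that is even, strictly positive everywhere, whose Fourier transform ψ̂ has compact support, and with ψ̂(0) = ∫ψ = 1. Then there exists a constant C > 0, depending only on ψ and ν, with the following property: for every function N in the class F₊ and every A > 0, if (ψ * dN)(λ) ≤ A λ^ν for all λ ≥ 1, then |N(λ) − (N * ψ)(λ)| ≤ C A λ^ν for all λ ≥ 1. -/

import Mathlib

open Filter Topology MeasureTheory Set
open scoped ENNReal NNReal

-- pow of sum bound
lemma aux_add_pow_le {a b : ℝ} (ha : 0 ≤ a) (hb : 0 ≤ b) (p : ℕ) :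
    (a + b) ^ p ≤ 2 ^ p * (a ^ p + b ^ p) := by
  calc (a + b) ^ p ≤ (2 * max a b) ^ p := by
        apply pow_le_pow_left₀ (by positivity)
        rcases le_total a b with h | h
        · simp [max_eq_right h]; linarith
        · simp [max_eq_left h]; linarith
    _ = 2 ^ p * (max a b) ^ p := by rw [mul_pow]
    _ ≤ 2 ^ p * (a ^ p + b ^ p) := by
        gcongr
        rcases le_total a b with h | h
        · rw [max_eq_right h]; nlinarith [pow_nonneg ha p]
        · rw [max_eq_left h]; nlinarith [pow_nonneg hb p]

lemma aux_N_nonneg (N : StieltjesFunction ℝ) (h0 : ∀ x : ℝ, x ≤ 0 → N x = 0)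
    {x : ℝ} (hx : 0 ≤ x) : 0 ≤ N x := by
  have := N.mono hx
  simpa [h0 0 le_rfl] using this

lemma aux_measure_Iic (N : StieltjesFunction ℝ) (h0 : ∀ x : ℝ, x ≤ 0 → N x = 0) :
    N.measure (Iic 0) = 0 := by
  have htend : Tendsto N atBot (𝓝 0) := by
    apply Tendsto.congr' _ tendsto_const_nhds
    filter_upwards [eventually_le_atBot (0 : ℝ)] with x hx
    exact (h0 x hx).symm
  rw [N.measure_Iic htend 0, h0 0 le_rfl]
  simp

lemma aux_temperate (N : StieltjesFunction ℝ) (h0 : ∀ x : ℝ, x ≤ 0 → N x = 0)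
    (C₀ : ℝ) (k : ℕ) (hg : ∀ x : ℝ, N x ≤ C₀ * (1 + |x|) ^ k) :
    Integrable (fun x : ℝ => (1 + ‖x‖) ^ (-((k + 2 : ℕ) : ℝ))) N.measure := by
  have hC₀ : 0 ≤ C₀ := by
    have h1 : (0:ℝ) ≤ N 1 := aux_N_nonneg N h0 zero_le_one
    have h2 := hg 1
    nlinarith [pow_pos (show (0:ℝ) < 1 + |(1:ℝ)|  by norm_num) k]
  set m : ℕ := k + 2 with hm
  have hpt : ∀ x : ℝ, (1 + ‖x‖) ^ (-((m : ℕ) : ℝ)) = ((1 + |x|) ^ m)⁻¹ := by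
    intro x
    rw [Real.rpow_neg (by positivity), Real.rpow_natCast, Real.norm_eq_abs]
  constructor
  · apply Continuous.aestronglyMeasurable
    apply Continuous.rpow_const (by continuity)
    intro x; left; positivity
  · rw [HasFiniteIntegral]
    have hnn : ∀ x : ℝ, ‖(1 + ‖x‖) ^ (-((m : ℕ) : ℝ))‖ₑ
        = ENNReal.ofReal (((1 + |x|) ^ m)⁻¹) := by
      intro x
      rw [← ofReal_norm_eq_enorm, hpt x, Real.norm_eq_abs,
        abs_of_nonneg (by positivity)]
    simp only [hnn]
    set F : ℝ → ℝ≥0∞ := fun x => ENNReal.ofReal (((1 + |x|) ^ m)⁻¹) with hF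
    have key : ∫⁻ x, F x ∂N.measure
        ≤ ∑' n : ℕ, ENNReal.ofReal ((((1 : ℝ) + n) ^ m)⁻¹ * (C₀ * (2 + n) ^ k)) := by
      calc ∫⁻ x, F x ∂N.measure = ∫⁻ x in Iic 0 ∪ Ioi 0, F x ∂N.measure := by
            rw [Iic_union_Ioi, setLIntegral_univ]
        _ ≤ (∫⁻ x in Iic 0, F x ∂N.measure) + ∫⁻ x in Ioi 0, F x ∂N.measure :=
            lintegral_union_le _ _ _
        _ = ∫⁻ x in Ioi 0, F x ∂N.measure := by
            rw [Measure.restrict_eq_zero.2 (aux_measure_Iic N h0), lintegral_zero_measure,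
              zero_add]
        _ ≤ ∫⁻ x in ⋃ n : ℕ, Ioc (n : ℝ) (n + 1), F x ∂N.measure := by
            apply lintegral_mono_set
            intro x hx
            have hx0 : (0:ℝ) < x := hx
            refine mem_iUnion.2 ⟨⌈x⌉₊ - 1, ?_, ?_⟩
            · have h1 : 1 ≤ ⌈x⌉₊ := Nat.one_le_ceil_iff.2 hx0
              have : ((⌈x⌉₊ - 1 : ℕ) : ℝ) = (⌈x⌉₊ : ℝ) - 1 := by
                push_cast [h1]; ring
              rw [this]
              have := Nat.ceil_lt_add_one hx0.le
              linarith
            · have h1 : 1 ≤ ⌈x⌉₊ := Nat.one_le_ceil_iff.2 hx0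
              have : ((⌈x⌉₊ - 1 : ℕ) : ℝ) = (⌈x⌉₊ : ℝ) - 1 := by
                push_cast [h1]; ring
              rw [this]
              have := Nat.le_ceil x
              linarith
        _ ≤ ∑' n : ℕ, ∫⁻ x in Ioc (n : ℝ) (n + 1), F x ∂N.measure :=
            lintegral_iUnion_le _ _
        _ ≤ ∑' n : ℕ, ENNReal.ofReal ((((1 : ℝ) + n) ^ m)⁻¹ * (C₀ * (2 + n) ^ k)) := by
            apply ENNReal.tsum_le_tsum
            intro n
            have step1 : ∫⁻ x in Ioc (n : ℝ) (n + 1), F x ∂N.measure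
                ≤ ENNReal.ofReal ((((1 : ℝ) + n) ^ m)⁻¹) * N.measure (Ioc (n : ℝ) (n + 1)) := by
              rw [← setLIntegral_const]
              apply setLIntegral_mono' measurableSet_Ioc
              intro x hx
              apply ENNReal.ofReal_le_ofReal
              have hxn : (n : ℝ) ≤ |x| := by
                rw [abs_of_pos (lt_of_le_of_lt (Nat.cast_nonneg n) hx.1)]
                exact hx.1.le
              apply inv_anti₀ (by positivity)
              apply pow_le_pow_left₀ (by positivity)
              linarith
            refine step1.trans ?_
            rw [N.measure_Ioc, ← ENNReal.ofReal_mul (by positivity)]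
            apply ENNReal.ofReal_le_ofReal
            have hmono : N (n : ℝ) ≥ 0 := aux_N_nonneg N h0 (Nat.cast_nonneg n)
            have hbd : N ((n : ℝ) + 1) ≤ C₀ * (2 + n) ^ k := by
              have := hg ((n : ℝ) + 1)
              rwa [abs_of_nonneg (by positivity), show (1 : ℝ) + ((n:ℝ) + 1) = 2 + n by ring]
                at this
            have : N ((n:ℝ) + 1) - N (n:ℝ) ≤ C₀ * (2 + n) ^ k := by linarith
            exact mul_le_mul_of_nonneg_left this (by positivity)
    refine lt_of_le_of_lt key ?_
    have hmaj : Summable (fun n : ℕ => (C₀ * 2 ^ k) * (((1 : ℝ) + n) ^ 2)⁻¹) := by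
      apply Summable.mul_left
      have h2 : Summable (fun n : ℕ => (((n : ℝ) + 1) ^ 2)⁻¹) := by
        have := (_root_.summable_nat_add_iff (f := fun n : ℕ => (((n : ℝ)) ^ 2)⁻¹) 1).2
          (Real.summable_nat_pow_inv.2 one_lt_two)
        simpa [Nat.cast_add] using this
      apply h2.congr
      intro n; rw [add_comm]
    have hsum : Summable (fun n : ℕ => (((1 : ℝ) + n) ^ m)⁻¹ * (C₀ * (2 + n) ^ k)) := by
      apply Summable.of_nonneg_of_le (fun n => by positivity) _ hmaj
      · intro n
        have h1 : ((2 : ℝ) + n) ^ k ≤ 2 ^ k * (1 + n) ^ k := by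
          calc ((2 : ℝ) + n) ^ k ≤ (2 * (1 + n)) ^ k := by
                apply pow_le_pow_left₀ (by positivity); push_cast; linarith
            _ = 2 ^ k * (1 + n) ^ k := mul_pow _ _ _
        have hsplit : ((1 : ℝ) + n) ^ m = (1 + n) ^ k * (1 + n) ^ 2 := by
          rw [hm, pow_add]
        calc (((1 : ℝ) + n) ^ m)⁻¹ * (C₀ * (2 + n) ^ k)
            ≤ (((1 : ℝ) + n) ^ m)⁻¹ * (C₀ * (2 ^ k * (1 + n) ^ k)) := by
              gcongr
            _ = (C₀ * 2 ^ k) * (((1 : ℝ) + n) ^ 2)⁻¹ := by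
              rw [hsplit]
              field_simp
    rw [← ENNReal.ofReal_tsum_of_nonneg (fun n => by positivity) hsum]
    exact ENNReal.ofReal_lt_top

lemma aux_integrable_shift (ψ : SchwartzMap ℝ ℝ) (N : StieltjesFunction ℝ)
    (h0 : ∀ x : ℝ, x ≤ 0 → N x = 0)
    (C₀ : ℝ) (k : ℕ) (hg : ∀ x : ℝ, N x ≤ C₀ * (1 + |x|) ^ k) (t : ℝ) :
    Integrable (fun μ : ℝ => ψ (t - μ)) N.measure := by
  haveI : N.measure.HasTemperateGrowth := ⟨⟨k + 2, aux_temperate N h0 C₀ k hg⟩⟩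
  have hmeas : AEStronglyMeasurable (fun μ : ℝ => ψ (t - μ)) N.measure :=
    (ψ.continuous.comp (continuous_const.sub continuous_id)).aestronglyMeasurable
  rw [← integrable_norm_iff hmeas]
  obtain ⟨Cb, hCb_pos, hCb⟩ := ψ.decay 0 0
  have hCb' : ∀ y : ℝ, ‖ψ y‖ ≤ Cb := by
    intro y
    have := hCb y
    simpa [norm_iteratedFDeriv_zero] using this
  set p := N.measure.integrablePower with hp
  obtain ⟨Cp, hCp_pos, hCp⟩ := ψ.decay p 0
  have hCp' : ∀ y : ℝ, ‖y‖ ^ p * ‖ψ y‖ ≤ Cp := by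
    intro y
    have := hCp y
    simpa [norm_iteratedFDeriv_zero] using this
  have key : Integrable (fun x : ℝ => ‖x‖ ^ 0 * ‖ψ (t - x)‖) N.measure := by
    apply integrable_of_le_of_pow_mul_le (C₁ := Cb)
      (C₂ := 2 ^ p * (|t| ^ p * Cb + Cp)) (fun x => hCb' _) _ hmeas
    intro x
    have h1 : ‖x‖ ≤ |t| + ‖t - x‖ := by
      rw [Real.norm_eq_abs, Real.norm_eq_abs]
      have := abs_sub_abs_le_abs_sub x t
      have := abs_sub_comm x t
      calc |x| = |t + (x - t)| := by ring_nf
        _ ≤ |t| + |x - t| := abs_add_le _ _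
        _ = |t| + |t - x| := by rw [abs_sub_comm]
    calc ‖x‖ ^ (0 + p) * ‖ψ (t - x)‖ ≤ (|t| + ‖t - x‖) ^ p * ‖ψ (t - x)‖ := by
          rw [zero_add]
          exact mul_le_mul_of_nonneg_right (pow_le_pow_left₀ (norm_nonneg x) h1 p) (norm_nonneg _)
      _ ≤ (2 ^ p * (|t| ^ p + ‖t - x‖ ^ p)) * ‖ψ (t - x)‖ :=
          mul_le_mul_of_nonneg_right (aux_add_pow_le (abs_nonneg t) (norm_nonneg _) p)
            (norm_nonneg _)
      _ = 2 ^ p * (|t| ^ p * ‖ψ (t - x)‖ + ‖t - x‖ ^ p * ‖ψ (t - x)‖) := by ring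
      _ ≤ 2 ^ p * (|t| ^ p * Cb + Cp) := by
          gcongr
          · exact hCb' _
          · exact hCp' _
  simpa using key

section Chain
variable {N : StieltjesFunction ℝ} {B ν : ℝ}

lemma aux_one_le_rpow {b : ℝ} (hb : 1 ≤ b) (hν : 0 ≤ ν) : 1 ≤ b ^ ν := by
  calc (1:ℝ) = 1 ^ ν := (Real.one_rpow ν).symm
    _ ≤ b ^ ν := Real.rpow_le_rpow zero_le_one hb hν

lemma aux_step (h0 : ∀ x : ℝ, x ≤ 0 → N x = 0) (hν : 0 ≤ ν) (hB : 0 ≤ B)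
    (key : ∀ t : ℝ, 1 ≤ t → N (t + 1) - N (t - 1) ≤ B * t ^ ν) :
    ∀ a b : ℝ, 0 ≤ a → 1 ≤ b → b - a ≤ 2 → N b - N a ≤ B * b ^ ν := by
  intro a b ha hb hab
  have hbν : 1 ≤ b ^ ν := aux_one_le_rpow hb hν
  rcases le_total b 2 with h2 | h2
  · have h' := key 1 le_rfl
    norm_num at h'
    have hNa : N 0 ≤ N a := N.mono ha
    have hNb : N b ≤ N 2 := N.mono h2
    have h00 : N 0 = 0 := h0 0 le_rfl
    calc N b - N a ≤ N 2 - N 0 := by linarith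
      _ ≤ B * 1 := by rw [h00] at h'; linarith
      _ ≤ B * b ^ ν := by nlinarith
  · have ht : (1:ℝ) ≤ b - 1 := by linarith
    have h' := key (b - 1) ht
    have he : b - 1 + 1 = b := by ring
    rw [he] at h'
    have hNa : N (b - 1 - 1) ≤ N a := N.mono (by linarith)
    have hmono : (b - 1) ^ ν ≤ b ^ ν := Real.rpow_le_rpow (by linarith) (by linarith) hν
    calc N b - N a ≤ N b - N (b - 1 - 1) := by linarith
      _ ≤ B * (b - 1) ^ ν := h'
      _ ≤ B * b ^ ν := by nlinarith

lemma aux_chain (h0 : ∀ x : ℝ, x ≤ 0 → N x = 0) (hν : 0 ≤ ν) (hB : 0 ≤ B)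
    (key : ∀ t : ℝ, 1 ≤ t → N (t + 1) - N (t - 1) ≤ B * t ^ ν) :
    ∀ n : ℕ, ∀ a b : ℝ, 0 ≤ a → 1 ≤ b → a ≤ b → b - a ≤ 2 * (n + 1) →
      N b - N a ≤ B * (n + 1) * b ^ ν := by
  intro n
  induction n with
  | zero =>
    intro a b ha hb hab h2
    have := aux_step h0 hν hB key a b ha hb (by push_cast at h2; linarith)
    push_cast
    simpa using this
  | succ n ih =>
    intro a b ha hb hab h2
    have hbν : 1 ≤ b ^ ν := aux_one_le_rpow hb hν
    set c := max a (b - 2) with hc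
    have hac : a ≤ c := le_max_left _ _
    have hcb : c ≤ b := max_le hab (by linarith)
    have hc0 : 0 ≤ c := le_trans ha hac
    have hbc : b - c ≤ 2 := by
      have : b - 2 ≤ c := le_max_right _ _
      linarith
    have h1 : N b - N c ≤ B * b ^ ν := aux_step h0 hν hB key c b hc0 hb hbc
    have h2' : N c - N a ≤ B * (n + 1) * b ^ ν := by
      rcases le_total 1 c with hc1 | hc1
      · have hca : c - a ≤ 2 * (n + 1) := by
          rcases max_cases a (b - 2) with ⟨hq, _⟩ | ⟨hq, _⟩
          · rw [hc, hq]; push_cast at h2 ⊢; linarith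
          · rw [hc, hq]; push_cast at h2 ⊢; linarith
        have := ih a c ha hc1 hac hca
        have hcν : c ^ ν ≤ b ^ ν := Real.rpow_le_rpow hc0 hcb hν
        nlinarith [mul_nonneg hB (by positivity : (0:ℝ) ≤ (n:ℝ) + 1)]
      · have h' := key 1 le_rfl
        norm_num at h'
        have h00 : N 0 = 0 := h0 0 le_rfl
        have hNa : N 0 ≤ N a := N.mono ha
        have hNc : N c ≤ N 2 := N.mono (by linarith)
        have hn1 : (1:ℝ) ≤ (n:ℝ) + 1 := by
          have := Nat.cast_nonneg (α := ℝ) n; linarith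
        have hprod : (1:ℝ) ≤ ((n:ℝ) + 1) * b ^ ν := by nlinarith
        calc N c - N a ≤ N 2 - N 0 := by linarith
          _ ≤ B * 1 := by rw [h00] at h'; linarith
          _ ≤ B * (n + 1) * b ^ ν := by
            rw [mul_assoc]
            exact mul_le_mul_of_nonneg_left (by linarith) hB
    push_cast
    calc N b - N a = (N b - N c) + (N c - N a) := by ring
      _ ≤ B * b ^ ν + B * (n + 1) * b ^ ν := add_le_add h1 h2'
      _ = B * (n + 1 + 1) * b ^ ν := by ring

end Chain

lemma aux_poly_int (ψ : SchwartzMap ℝ ℝ) (m : ℕ) :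
    Integrable (fun μ : ℝ => (1 + |μ|) ^ m * ψ μ) := by
  have hmaj : Integrable (fun μ : ℝ =>
      2 ^ m * (‖ψ μ‖ + ‖μ‖ ^ m * ‖ψ μ‖)) := by
    exact (ψ.integrable.norm.add (ψ.integrable_pow_mul volume m)).const_mul _
  apply hmaj.mono'
  · exact (((continuous_const.add continuous_abs).pow m).mul ψ.continuous).aestronglyMeasurable
  · filter_upwards with μ
    have h1 : (1 + |μ|) ^ m ≤ 2 ^ m * (1 + |μ| ^ m) := by
      have := aux_add_pow_le (a := 1) (b := |μ|) zero_le_one (abs_nonneg μ) m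
      simpa using this
    have h2 : ‖(1 + |μ|) ^ m * ψ μ‖ = (1 + |μ|) ^ m * ‖ψ μ‖ := by
      rw [norm_mul, Real.norm_eq_abs ((1+|μ|)^m), abs_of_nonneg (by positivity)]
    rw [h2]
    calc (1 + |μ|) ^ m * ‖ψ μ‖ ≤ (2 ^ m * (1 + |μ| ^ m)) * ‖ψ μ‖ :=
          mul_le_mul_of_nonneg_right h1 (norm_nonneg _)
      _ = 2 ^ m * (‖ψ μ‖ + |μ| ^ m * ‖ψ μ‖) := by ring
      _ = 2 ^ m * (‖ψ μ‖ + ‖μ‖ ^ m * ‖ψ μ‖) := by rw [Real.norm_eq_abs μ]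

lemma aux_N_nonneg_all (N : StieltjesFunction ℝ) (h0 : ∀ x : ℝ, x ≤ 0 → N x = 0) (x : ℝ) :
    0 ≤ N x := by
  rcases le_total x 0 with h | h
  · rw [h0 x h]
  · exact aux_N_nonneg N h0 h

lemma aux_C0_nonneg (N : StieltjesFunction ℝ) (h0 : ∀ x : ℝ, x ≤ 0 → N x = 0)
    {C₀ : ℝ} {k : ℕ} (hg : ∀ x : ℝ, N x ≤ C₀ * (1 + |x|) ^ k) : 0 ≤ C₀ := by
  have h1 : (0:ℝ) ≤ N 1 := aux_N_nonneg N h0 zero_le_one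
  have h2 := hg 1
  nlinarith [pow_pos (show (0:ℝ) < 1 + |(1:ℝ)| by norm_num) k]


/-- **Fourier Tauberian theorem, one term.** Let `ν ≥ 0` and let `ψ` be a
real-valued Schwartz function on `ℝ` that is even, strictly positive, whose Fourier transform
`ψ̂(t) = ∫ e^{−iλt}ψ(λ)dλ` has compact support, and with `ψ̂(0) = ∫ψ = 1`. Then there is a
constant `C > 0` depending only on `ψ, ν` such that: for every `N` in the class `F₊` (monotone
nondecreasing, right continuous — encoded as a Stieltjes function —, vanishing on `(−∞,0]`, of
polynomial growth) and every `A > 0`, if `(ψ * dN)(λ) ≤ A λ^ν` for all `λ ≥ 1`, then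
`|N(λ) − (N * ψ)(λ)| ≤ C A λ^ν` for all `λ ≥ 1`. -/
theorem statement14 (ν : ℝ) (hν : 0 ≤ ν) (ψ : SchwartzMap ℝ ℝ)
    (heven : ∀ x : ℝ, ψ (-x) = ψ x)
    (hpos : ∀ x : ℝ, 0 < ψ x)
    (hhatcs : HasCompactSupport fun t : ℝ =>
      ∫ x : ℝ, Complex.exp (-(Complex.I * (t : ℂ) * (x : ℂ))) * (ψ x : ℂ))
    (hhat0 : (∫ x : ℝ, Complex.exp (-(Complex.I * (0 : ℂ) * (x : ℂ))) * (ψ x : ℂ)) = 1)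
    (hnorm : (∫ x : ℝ, ψ x) = 1) :
    ∃ C : ℝ, 0 < C ∧ ∀ N : StieltjesFunction ℝ,
      (∀ x : ℝ, x ≤ 0 → N x = 0) →
      (∃ C₀ : ℝ, ∃ k : ℕ, ∀ x : ℝ, N x ≤ C₀ * (1 + |x|) ^ k) →
      ∀ A : ℝ, 0 < A →
        (∀ lam : ℝ, 1 ≤ lam → (∫ μ : ℝ, ψ (lam - μ) ∂N.measure) ≤ A * lam ^ ν) →
        ∀ lam : ℝ, 1 ≤ lam →
          |N lam - ∫ μ : ℝ, N (lam - μ) * ψ μ| ≤ C * A * lam ^ ν := by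
  obtain ⟨x₀, hx₀mem, hmin'⟩ := (isCompact_Icc (a := (-1:ℝ)) (b := 1)).exists_isMinOn
    ⟨0, by norm_num⟩ ψ.continuous.continuousOn
  have hmin : ∀ y ∈ Set.Icc (-1:ℝ) 1, ψ x₀ ≤ ψ y := fun y hy => hmin' hy
  set δ := ψ x₀ with hδdef
  have hδ : 0 < δ := hpos x₀
  set m : ℕ := ⌈ν⌉₊ + 1 with hmdef
  set I := ∫ μ : ℝ, (1 + |μ|) ^ m * ψ μ with hIdef
  have hI : 0 ≤ I := integral_nonneg fun μ => mul_nonneg (by positivity) (hpos μ).le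
  refine ⟨2 * I / δ + 1, by nlinarith [div_nonneg (by linarith : (0:ℝ) ≤ 2 * I) hδ.le], ?_⟩
  intro N h0 hgrow A hA hyp lam hlam
  obtain ⟨C₀, k, hg⟩ := hgrow
  have hC₀ : 0 ≤ C₀ := aux_C0_nonneg N h0 hg
  have hlam0 : (0:ℝ) < lam := by linarith
  have hlamν : (0:ℝ) < lam ^ ν := Real.rpow_pos_of_pos hlam0 ν
  have hBnn : 0 ≤ A / δ := by positivity
  -- key increment estimate
  have key : ∀ t : ℝ, 1 ≤ t → N (t + 1) - N (t - 1) ≤ (A / δ) * t ^ ν := by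
    intro t ht
    have hint : Integrable (fun μ : ℝ => ψ (t - μ)) N.measure :=
      aux_integrable_shift ψ N h0 C₀ k hg t
    have hmeasIoc : N.measure (Set.Ioc (t - 1) (t + 1))
        = ENNReal.ofReal (N (t + 1) - N (t - 1)) := N.measure_Ioc _ _
    have hfin : N.measure (Set.Ioc (t - 1) (t + 1)) ≠ ⊤ := by
      rw [hmeasIoc]; exact ENNReal.ofReal_ne_top
    have hlow : δ * (N (t + 1) - N (t - 1))
        ≤ ∫ μ in Set.Ioc (t - 1) (t + 1), ψ (t - μ) ∂N.measure := by
      have h1 : ∫ μ in Set.Ioc (t - 1) (t + 1), δ ∂N.measure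
          = δ * (N (t + 1) - N (t - 1)) := by
        rw [setIntegral_const, measureReal_def, hmeasIoc,
          ENNReal.toReal_ofReal (sub_nonneg.2 (N.mono (by linarith))), smul_eq_mul]
        ring
      rw [← h1]
      apply setIntegral_mono_on (integrableOn_const hfin)
        hint.integrableOn measurableSet_Ioc
      intro x hx
      exact hmin (t - x) ⟨by linarith [hx.2], by linarith [hx.1]⟩
    have hup : ∫ μ in Set.Ioc (t - 1) (t + 1), ψ (t - μ) ∂N.measure
        ≤ ∫ μ, ψ (t - μ) ∂N.measure :=
      setIntegral_le_integral hint (Eventually.of_forall fun μ => (hpos _).le)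
    have hall : δ * (N (t + 1) - N (t - 1)) ≤ A * t ^ ν :=
      le_trans hlow (le_trans hup (hyp t ht))
    rw [div_mul_eq_mul_div, le_div_iff₀ hδ]
    linarith [hall, mul_comm (N (t + 1) - N (t - 1)) δ,
      mul_comm δ (N (t + 1) - N (t - 1))]
  -- pointwise increment bound
  have pointwise : ∀ μ : ℝ, |N lam - N (lam - μ)|
      ≤ (A / δ) * lam ^ ν * ((|μ| + 2) * (1 + |μ|) ^ ν) := by
    intro μ
    have h1μ : (1:ℝ) ≤ 1 + |μ| := by linarith [abs_nonneg μ]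
    have hμν : (1:ℝ) ≤ (1 + |μ|) ^ ν := aux_one_le_rpow h1μ hν
    rcases le_total 0 μ with hμ | hμ
    · -- μ ≥ 0
      set a := max (lam - μ) 0 with ha
      have hNa : N a = N (lam - μ) := by
        rcases le_total 0 (lam - μ) with h | h
        · rw [ha, max_eq_left h]
        · rw [ha, max_eq_right h, h0 _ h, h0 0 le_rfl]
      have hceil : (lam : ℝ) - a ≤ 2 * ((⌈μ⌉₊ : ℝ) + 1) := by
        have h1 : lam - a ≤ μ := by
          have := le_max_left (lam - μ) 0
          simp only [← ha] at this; linarith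
        have h2 := Nat.le_ceil μ
        have h3 := Nat.cast_nonneg (α := ℝ) ⌈μ⌉₊
        linarith
      have chain := aux_chain h0 hν hBnn key ⌈μ⌉₊ a lam (le_max_right _ _) hlam
        (max_le (by linarith) (by linarith)) hceil
      rw [hNa] at chain
      have habs : |N lam - N (lam - μ)| = N lam - N (lam - μ) :=
        abs_of_nonneg (sub_nonneg.2 (N.mono (by linarith)))
      rw [habs, abs_of_nonneg hμ]
      have hμν' : (1:ℝ) ≤ (1 + μ) ^ ν := by rw [abs_of_nonneg hμ] at hμν; exact hμν
      have hceil2 : ((⌈μ⌉₊ : ℝ) + 1) ≤ μ + 2 := by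
        have := Nat.ceil_lt_add_one hμ
        linarith
      calc N lam - N (lam - μ) ≤ (A / δ) * ((⌈μ⌉₊ : ℝ) + 1) * lam ^ ν := chain
        _ ≤ (A / δ) * (μ + 2) * lam ^ ν := by
            apply mul_le_mul_of_nonneg_right _ hlamν.le
            exact mul_le_mul_of_nonneg_left hceil2 hBnn
        _ ≤ (A / δ) * lam ^ ν * ((μ + 2) * (1 + μ) ^ ν) := by
            have hμ2 : (0:ℝ) ≤ μ + 2 := by linarith
            nlinarith [mul_nonneg (mul_nonneg hBnn hlamν.le) hμ2]
    · -- μ ≤ 0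
      have habsμ : |μ| = -μ := abs_of_nonpos hμ
      set b := lam - μ with hb
      have hbl : lam ≤ b := by rw [hb]; linarith
      have hb1 : (1:ℝ) ≤ b := le_trans hlam hbl
      have hceil : b - lam ≤ 2 * ((⌈|μ|⌉₊ : ℝ) + 1) := by
        have h2 := Nat.le_ceil |μ|
        have h3 := Nat.cast_nonneg (α := ℝ) ⌈|μ|⌉₊
        rw [hb]; linarith
      have chain := aux_chain h0 hν hBnn key ⌈|μ|⌉₊ lam b (by linarith) hb1 hbl hceil
      have habs : |N lam - N (lam - μ)| = N b - N lam := by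
        rw [← hb, abs_of_nonpos (sub_nonpos.2 (N.mono hbl))]; ring
      rw [habs]
      have hceil2 : ((⌈|μ|⌉₊ : ℝ) + 1) ≤ |μ| + 2 := by
        have := Nat.ceil_lt_add_one (abs_nonneg μ)
        linarith
      have hbpow : b ^ ν ≤ lam ^ ν * (1 + |μ|) ^ ν := by
        rw [← Real.mul_rpow hlam0.le (by positivity)]
        apply Real.rpow_le_rpow (by linarith) _ hν
        rw [hb, habsμ]; nlinarith
      calc N b - N lam ≤ (A / δ) * ((⌈|μ|⌉₊ : ℝ) + 1) * b ^ ν := chain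
        _ ≤ (A / δ) * ((|μ| + 2) * (lam ^ ν * (1 + |μ|) ^ ν)) := by
            rw [mul_assoc]
            apply mul_le_mul_of_nonneg_left _ hBnn
            apply mul_le_mul hceil2 hbpow (Real.rpow_nonneg (by linarith) ν) (by linarith [abs_nonneg μ])
        _ = (A / δ) * lam ^ ν * ((|μ| + 2) * (1 + |μ|) ^ ν) := by ring
  -- polynomial domination of the weight
  have hm : ∀ μ : ℝ, (|μ| + 2) * (1 + |μ|) ^ ν ≤ 2 * (1 + |μ|) ^ m := by
    intro μ
    have h1μ : (1:ℝ) ≤ 1 + |μ| := by linarith [abs_nonneg μ]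
    have h1 : (1 + |μ|) ^ ν ≤ (1 + |μ|) ^ ((⌈ν⌉₊ : ℕ) : ℝ) :=
      Real.rpow_le_rpow_of_exponent_le h1μ (Nat.le_ceil ν)
    rw [Real.rpow_natCast] at h1
    have h2 : |μ| + 2 ≤ 2 * (1 + |μ|) := by linarith [abs_nonneg μ]
    calc (|μ| + 2) * (1 + |μ|) ^ ν ≤ (2 * (1 + |μ|)) * (1 + |μ|) ^ (⌈ν⌉₊ : ℕ) :=
          mul_le_mul h2 h1 (Real.rpow_nonneg (by linarith [abs_nonneg μ]) ν) (by positivity)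
      _ = 2 * (1 + |μ|) ^ m := by rw [hmdef, pow_succ]; ring
  -- integrability facts
  have hNm : Measurable (fun μ : ℝ => N (lam - μ)) :=
    N.mono.measurable.comp (measurable_const.sub measurable_id)
  have hint1 : Integrable (fun μ : ℝ => N (lam - μ) * ψ μ) := by
    apply Integrable.mono' ((aux_poly_int ψ k).const_mul (C₀ * (1 + |lam|) ^ k))
    · exact (hNm.mul ψ.continuous.measurable).aestronglyMeasurable
    · filter_upwards with μ
      have hN0 : 0 ≤ N (lam - μ) := aux_N_nonneg_all N h0 _
      have hb1 : (1:ℝ) + |lam - μ| ≤ (1 + |lam|) * (1 + |μ|) := by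
        have := abs_sub (lam) (μ)
        have h := abs_sub_abs_le_abs_sub lam μ
        have habs : |lam - μ| ≤ |lam| + |μ| := abs_sub _ _
        nlinarith [abs_nonneg lam, abs_nonneg μ]
      have hb2 : N (lam - μ) ≤ C₀ * ((1 + |lam|) ^ k * (1 + |μ|) ^ k) := by
        calc N (lam - μ) ≤ C₀ * (1 + |lam - μ|) ^ k := hg _
          _ ≤ C₀ * ((1 + |lam|) * (1 + |μ|)) ^ k := by
              apply mul_le_mul_of_nonneg_left _ hC₀
              exact pow_le_pow_left₀ (by positivity) hb1 k
          _ = C₀ * ((1 + |lam|) ^ k * (1 + |μ|) ^ k) := by rw [mul_pow]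
      have : ‖N (lam - μ) * ψ μ‖ = N (lam - μ) * ψ μ := by
        rw [Real.norm_eq_abs, abs_of_nonneg (mul_nonneg hN0 (hpos μ).le)]
      rw [this]
      calc N (lam - μ) * ψ μ ≤ (C₀ * ((1 + |lam|) ^ k * (1 + |μ|) ^ k)) * ψ μ :=
            mul_le_mul_of_nonneg_right hb2 (hpos μ).le
        _ = C₀ * (1 + |lam|) ^ k * ((1 + |μ|) ^ k * ψ μ) := by ring
  have hint2 : Integrable (fun μ : ℝ => N lam * ψ μ) := ψ.integrable.const_mul _
  have hint3 : Integrable (fun μ : ℝ => (1 + |μ|) ^ m * ψ μ) := aux_poly_int ψ m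
  -- the identity
  have hid : N lam - (∫ μ : ℝ, N (lam - μ) * ψ μ)
      = ∫ μ : ℝ, (N lam * ψ μ - N (lam - μ) * ψ μ) := by
    rw [integral_sub hint2 hint1, integral_const_mul, hnorm, mul_one]
  rw [hid]
  have hmain : |∫ μ : ℝ, (N lam * ψ μ - N (lam - μ) * ψ μ)|
      ≤ ∫ μ : ℝ, ((A / δ) * lam ^ ν * 2) * ((1 + |μ|) ^ m * ψ μ) := by
    rw [← Real.norm_eq_abs]
    apply norm_integral_le_of_norm_le (hint3.const_mul _)
    filter_upwards with μ
    have h1 : ‖N lam * ψ μ - N (lam - μ) * ψ μ‖ = |N lam - N (lam - μ)| * ψ μ := by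
      rw [Real.norm_eq_abs, show N lam * ψ μ - N (lam - μ) * ψ μ
        = (N lam - N (lam - μ)) * ψ μ by ring, abs_mul, abs_of_nonneg (hpos μ).le]
    rw [h1]
    calc |N lam - N (lam - μ)| * ψ μ
        ≤ ((A / δ) * lam ^ ν * ((|μ| + 2) * (1 + |μ|) ^ ν)) * ψ μ :=
          mul_le_mul_of_nonneg_right (pointwise μ) (hpos μ).le
      _ ≤ ((A / δ) * lam ^ ν * (2 * (1 + |μ|) ^ m)) * ψ μ := by
          apply mul_le_mul_of_nonneg_right _ (hpos μ).le
          exact mul_le_mul_of_nonneg_left (hm μ) (by positivity)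
      _ = ((A / δ) * lam ^ ν * 2) * ((1 + |μ|) ^ m * ψ μ) := by ring
  have hIeq : ∫ μ : ℝ, ((A / δ) * lam ^ ν * 2) * ((1 + |μ|) ^ m * ψ μ)
      = (A / δ) * lam ^ ν * 2 * I := by
    rw [integral_const_mul, ← hIdef]
  rw [hIeq] at hmain
  refine hmain.trans ?_
  have hfrac : (A / δ) * lam ^ ν * 2 * I = (2 * I / δ) * (A * lam ^ ν) := by
    field_simp
  rw [hfrac]
  have h2 : (0:ℝ) ≤ A * lam ^ ν := by positivity
  calc (2 * I / δ) * (A * lam ^ ν) ≤ (2 * I / δ + 1) * (A * lam ^ ν) :=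
        mul_le_mul_of_nonneg_right (by linarith) h2
    _ = (2 * I / δ + 1) * A * lam ^ ν := by ring
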